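/- The language L' = { u^n 0^m h : n, m ≥ 0 and n ≥ 2^m − 1 } over the alphabet {u, 0, h} is not context-free. -/

import Mathlib

inductive Alph : Type
  | u | z | h
deriving DecidableEq

/-- The regular language { u^n 0^m h : n, m ≥ 0 } (with `Alph.z` playing the role of `0`). -/
def Lu0h : Language Alph :=
  {w | ∃ n m : ℕ, w = List.replicate n Alph.u ++ List.replicate m Alph.z ++ [Alph.h]}

/-- The language L' = { u^n 0^m h : n ≥ 2^m − 1 }. -/
def Lcc' : Language Alph :=
  {w | ∃ n m : ℕ, w = List.replicate n Alph.u ++ List.replicate m Alph.z ++ [Alph.h] ∧ 2 ^ m - 1 ≤ n}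

/-- n-fold repetition of a word. -/
def listPow {α : Type*} (l : List α) (n : ℕ) : List α := (List.replicate n l).flatten


inductive PTree (T N : Type*) : Type _
  | leaf : T → PTree T N
  | node : N → List (PTree T N) → PTree T N

namespace PTree
variable {T N : Type*}

def sym : PTree T N → Symbol T N
  | .leaf a => Symbol.terminal a
  | .node A _ => Symbol.nonterminal A

def yield : PTree T N → List T
  | .leaf a => [a]
  | .node _ [] => []
  | .node A (c :: cs) => yield c ++ yield (.node A cs)

def size : PTree T N → ℕ
  | .leaf _ => 1
  | .node _ [] => 1
  | .node A (c :: cs) => size c + size (.node A cs)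

def height : PTree T N → ℕ
  | .leaf _ => 0
  | .node _ [] => 1
  | .node A (c :: cs) => max (height c + 1) (height (.node A cs))

end PTree
namespace PTree
variable {T N : Type*}

lemma yield_node (A : N) (cs : List (PTree T N)) :
    yield (.node A cs) = cs.flatMap yield := by
  induction cs with
  | nil => rw [yield]; rfl
  | cons c cs ih => rw [yield, ih]; rfl

lemma size_pos (t : PTree T N) : 1 ≤ t.size := by
  induction t using size.induct with
  | case1 a => simp [size]
  | case2 A => simp [size]
  | case3 A c cs ih1 ih2 => rw [size]; omega

lemma size_lt_of_mem {A : N} {cs : List (PTree T N)} {s : PTree T N} (hs : s ∈ cs) :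
    s.size < size (.node A cs) := by
  induction cs with
  | nil => simp at hs
  | cons c cs ih =>
    rw [size]
    rcases List.mem_cons.mp hs with h | h
    · subst h; have := size_pos (node A cs); omega
    · have := ih h; have := size_pos c; omega

lemma size_node_cons (A : N) (c : PTree T N) (cs : List (PTree T N)) :
    size (.node A (c :: cs)) = c.size + size (.node A cs) := by rw [size]

lemma height_node_pos (A : N) (cs : List (PTree T N)) : 1 ≤ height (.node A cs) := by
  induction cs with
  | nil => simp [height]
  | cons c cs ih => rw [height]; omega

lemma exists_height_child {A : N} {cs : List (PTree T N)}
    (h : 2 ≤ height (.node A cs)) :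
    ∃ s ∈ cs, height (.node A cs) = s.height + 1 := by
  induction cs with
  | nil => rw [height] at h; omega
  | cons c cs ih =>
    rw [height] at h ⊢
    rcases Nat.le_total (height (node A cs)) (c.height + 1) with hle | hle
    · exact ⟨c, List.mem_cons_self .., by omega⟩
    · rw [Nat.max_eq_right hle] at h ⊢
      obtain ⟨s, hs, hh⟩ := ih h
      exact ⟨s, List.mem_cons_of_mem _ hs, hh⟩

lemma height_lt_of_mem {A : N} {cs : List (PTree T N)} {s : PTree T N} (hs : s ∈ cs) :
    s.height < height (.node A cs) := by
  induction cs with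
  | nil => simp at hs
  | cons c cs ih =>
    rw [height]
    rcases List.mem_cons.mp hs with h | h
    · subst h; omega
    · have := ih h; omega

end PTree
namespace PTree
universe uT
variable {T : Type uT}

inductive Valid (g : ContextFreeGrammar.{uT} T) : PTree T g.NT → Prop
  | leaf (a : T) : Valid g (.leaf a)
  | node (A : g.NT) (cs : List (PTree T g.NT)) (r : ContextFreeRule T g.NT)
      (hr : r ∈ g.rules) (hi : r.input = A) (ho : r.output = cs.map sym)
      (h : ∀ s ∈ cs, Valid g s) : Valid g (.node A cs)

variable {g : ContextFreeGrammar.{uT} T}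

lemma forest_derives {cs : List (PTree T g.NT)}
    (h : ∀ s ∈ cs, g.Derives [s.sym] (s.yield.map Symbol.terminal)) :
    g.Derives (cs.map sym) ((cs.flatMap yield).map Symbol.terminal) := by
  induction cs with
  | nil => simpa using ContextFreeGrammar.Derives.refl ([] : List (Symbol T g.NT))
  | cons c cs ih =>
    rw [List.map_cons, List.flatMap_cons, List.map_append]
    have h1 : g.Derives ([c.sym] ++ cs.map sym)
        (c.yield.map Symbol.terminal ++ cs.map sym) :=
      (h c (List.mem_cons_self ..)).append_right _
    exact h1.trans ((ih fun s hs => h s (List.mem_cons_of_mem _ hs)).append_left _)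

lemma Valid.derives {t : PTree T g.NT} (ht : Valid g t) :
    g.Derives [t.sym] (t.yield.map Symbol.terminal) := by
  induction ht with
  | leaf a => rw [yield]; exact ContextFreeGrammar.Derives.refl _
  | node A cs r hr hi ho h ih =>
    have hp : g.Produces [sym (.node A cs)] r.output := by
      refine ⟨r, hr, ?_⟩
      rw [sym, ← hi]
      simpa using ContextFreeRule.Rewrites.head []
    rw [yield_node]
    exact hp.trans_derives (ho ▸ forest_derives ih)

end PTree
namespace PTree
open Classical in
noncomputable def NTset (g : ContextFreeGrammar.{uT} T) : Finset g.NT :=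
  g.rules.image (·.input)

def K (g : ContextFreeGrammar.{uT} T) : ℕ :=
  (g.rules.sup fun r => r.output.length) + 2

lemma two_le_K (g : ContextFreeGrammar.{uT} T) : 2 ≤ K g := Nat.le_add_left 2 _

variable {g : ContextFreeGrammar.{uT} T}

lemma Valid.mem_NTset {A : g.NT} {cs : List (PTree T g.NT)}
    (h : Valid g (.node A cs)) : A ∈ NTset g := by
  classical
  cases h with
  | node A cs r hr hi ho h =>
    rw [NTset]
    convert Finset.mem_image_of_mem (·.input) hr using 2
    exact hi.symm

lemma Valid.length_yield_le {t : PTree T g.NT} (ht : Valid g t) :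
    t.yield.length ≤ K g ^ t.height := by
  induction ht with
  | leaf a => simp [yield, height]
  | node A cs r hr hi ho h ih =>
    rw [yield_node, List.length_flatMap]
    have hcs : cs.length ≤ K g := by
      have : r.output.length ≤ g.rules.sup fun r => r.output.length :=
        Finset.le_sup (f := fun r => r.output.length) hr
      have hlen : r.output.length = cs.length := by rw [ho, List.length_map]
      rw [K]; omega
    have hbound : ∀ x ∈ cs.map (fun s => s.yield.length),
        x ≤ K g ^ (height (.node A cs) - 1) := by
      intro x hx
      obtain ⟨s, hs, rfl⟩ := List.mem_map.mp hx
      calc s.yield.length ≤ K g ^ s.height := ih s hs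
        _ ≤ K g ^ (height (.node A cs) - 1) := by
          apply Nat.pow_le_pow_right (by have := two_le_K g; omega)
          have := height_lt_of_mem (A := A) hs
          omega
    calc (cs.map fun s => s.yield.length).sum
        ≤ (cs.map fun s => s.yield.length).length • K g ^ (height (.node A cs) - 1) :=
          List.sum_le_card_nsmul _ _ hbound
      _ = cs.length * K g ^ (height (.node A cs) - 1) := by
          rw [List.length_map, smul_eq_mul]
      _ ≤ K g * K g ^ (height (.node A cs) - 1) :=
          Nat.mul_le_mul_right _ hcs
      _ = K g ^ (height (.node A cs) - 1 + 1) := (pow_succ' _ _).symm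
      _ = K g ^ height (.node A cs) := by
          have := height_node_pos A cs; congr 1; omega

end PTree
namespace PTree
variable {g : ContextFreeGrammar.{uT} T}

lemma exists_forest {w : List T} {ss : List (Symbol T g.NT)}
    (h : g.Derives ss (w.map Symbol.terminal)) :
    ∃ cs : List (PTree T g.NT),
      cs.map sym = ss ∧ (∀ s ∈ cs, Valid g s) ∧ cs.flatMap yield = w := by
  induction h using Relation.ReflTransGen.head_induction_on with
  | refl =>
    refine ⟨w.map .leaf, ?_, ?_, ?_⟩
    · simp [sym]
    · intro s hs
      obtain ⟨a, _, rfl⟩ := List.mem_map.mp hs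
      exact Valid.leaf a
    · induction w with
      | nil => rfl
      | cons a w ihw => simpa [yield] using ihw
  | head hprod _ ih =>
    obtain ⟨r, hr, hrw⟩ := hprod
    obtain ⟨p, q, hu, hv⟩ := hrw.exists_parts
    obtain ⟨cs', hmap, hvalid, hyield⟩ := ih
    rw [hv, List.append_assoc, List.map_eq_append_iff] at hmap
    obtain ⟨cp, crest, rfl, hcp, hcrest⟩ := hmap
    rw [List.map_eq_append_iff] at hcrest
    obtain ⟨co, cq, rfl, hco, hcq⟩ := hcrest
    have hvo : Valid g (.node r.input co) :=
      Valid.node _ _ r hr rfl hco.symm fun s hs =>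
        hvalid s (by simp [hs])
    refine ⟨cp ++ .node r.input co :: cq, ?_, ?_, ?_⟩
    · rw [hu]
      simp [hcp, hcq, sym]
    · intro s hs
      rcases List.mem_append.mp hs with h1 | h1
      · exact hvalid s (by simp [h1])
      · rcases List.mem_cons.mp h1 with h2 | h2
        · exact h2 ▸ hvo
        · exact hvalid s (by simp [h2])
    · rw [← hyield]
      simp [yield_node]

lemma exists_tree {w : List T} (h : w ∈ g.language) :
    ∃ cs, Valid g (.node g.initial cs) ∧ yield (.node g.initial cs) = w := by
  obtain ⟨cs, hmap, hvalid, hyield⟩ := exists_forest h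
  match cs, hmap with
  | [], hmap => simp at hmap
  | (t₁ :: t₂ :: ts), hmap => simp at hmap
  | [t], hmap =>
    have hsym : t.sym = Symbol.nonterminal g.initial := by
      simpa using hmap
    match t, hsym with
    | .node A cs0, hsym =>
      have hA : A = g.initial := by
        rw [sym] at hsym
        exact Symbol.nonterminal.inj hsym
      subst hA
      exact ⟨cs0, hvalid _ (by simp), by simpa using hyield⟩

end PTree
namespace PTree
variable {g : ContextFreeGrammar.{uT} T}

def Ctx (g : ContextFreeGrammar.{uT} T) (A B : g.NT) (x z : List T) : Prop :=
  g.Derives [Symbol.nonterminal A]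
    (x.map Symbol.terminal ++ [Symbol.nonterminal B] ++ z.map Symbol.terminal)

lemma Ctx.rfl (A : g.NT) : Ctx g A A [] [] := by
  unfold Ctx
  simpa using ContextFreeGrammar.Derives.refl [Symbol.nonterminal A]

lemma Ctx.comp {A B C : g.NT} {x z x' z' : List T}
    (h1 : Ctx g A B x z) (h2 : Ctx g B C x' z') :
    Ctx g A C (x ++ x') (z' ++ z) := by
  unfold Ctx at *
  refine h1.trans ?_
  have := (h2.append_left (x.map Symbol.terminal)).append_right (z.map Symbol.terminal)
  simpa [List.append_assoc] using this

lemma yield_node_middle (A : N) (l₁ l₂ : List (PTree T N)) (c : PTree T N) :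
    yield (.node A (l₁ ++ c :: l₂)) = l₁.flatMap yield ++ c.yield ++ l₂.flatMap yield := by
  simp [yield_node, List.append_assoc]

lemma size_node_middle (A : N) (l₁ l₂ : List (PTree T N)) (c : PTree T N) :
    size (.node A (l₁ ++ c :: l₂)) = size (.node A (l₁ ++ l₂)) + c.size := by
  induction l₁ with
  | nil => simp [size_node_cons]; omega
  | cons d l₁ ih => simp only [List.cons_append, size_node_cons, ih]; omega

lemma ctx_child {A A' : g.NT} {cs₁ cs₂ cs'' : List (PTree T g.NT)}
    (hv : Valid g (.node A (cs₁ ++ .node A' cs'' :: cs₂))) :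
    Ctx g A A' (cs₁.flatMap yield) (cs₂.flatMap yield) := by
  cases hv with
  | node _ _ r hr hi ho h =>
    unfold Ctx
    have hp : g.Produces [Symbol.nonterminal A] r.output := by
      refine ⟨r, hr, ?_⟩
      rw [← hi]
      simpa using ContextFreeRule.Rewrites.head []
    refine hp.trans_derives ?_
    rw [ho, List.map_append, List.map_cons]
    have d1 : g.Derives (cs₁.map sym) ((cs₁.flatMap yield).map Symbol.terminal) :=
      forest_derives fun s hs => (h s (by simp [hs])).derives
    have d2 : g.Derives (cs₂.map sym) ((cs₂.flatMap yield).map Symbol.terminal) :=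
      forest_derives fun s hs => (h s (by simp [hs])).derives
    have e1 := d1.append_right (sym (.node A' cs'') :: cs₂.map sym)
    have e2 := (d2.append_left
      ((cs₁.flatMap yield).map Symbol.terminal ++ [sym (.node A' cs'')]))
    refine e1.trans ?_
    have : sym (.node A' cs'') = Symbol.nonterminal A' := by rw [sym]
    rw [this] at e2 ⊢
    simpa [List.append_assoc] using e2

end PTree
namespace PTree
variable {g : ContextFreeGrammar.{uT} T}

def Hit (g : ContextFreeGrammar.{uT} T) (A : g.NT) (t : PTree T g.NT) (B : g.NT) : Prop :=
  ∃ x z cs₂, Valid g (.node B cs₂) ∧ t.yield = x ++ yield (.node B cs₂) ++ z ∧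
    Ctx g A B x z ∧ size (.node B cs₂) ≤ t.size

def Found (g : ContextFreeGrammar.{uT} T) (A : g.NT) (t : PTree T g.NT) : Prop :=
  ∃ B x v y z u, t.yield = x ++ v ++ y ++ z ++ u ∧
    Ctx g A B x u ∧ Ctx g B B v z ∧
    g.Derives [Symbol.nonterminal B] (y.map Symbol.terminal) ∧
    (v ++ z ≠ [] ∨ ∃ cs', Valid g (.node A cs') ∧
      yield (.node A cs') = t.yield ∧ size (.node A cs') < t.size)

lemma descent (n : ℕ) : ∀ (A : g.NT) (cs : List (PTree T g.NT)) (seen : Finset g.NT),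
    size (.node A cs) ≤ n → Valid g (.node A cs) → seen ⊆ NTset g →
    (NTset g).card < height (.node A cs) + seen.card →
    (∃ B ∈ seen, Hit g A (.node A cs) B) ∨ Found g A (.node A cs) := by
  classical
  induction n using Nat.strong_induction_on with
  | _ n ih =>
  intro A cs seen hn hv hseen hht
  by_cases hA : A ∈ seen
  · refine Or.inl ⟨A, hA, [], [], cs, hv, by simp, Ctx.rfl A, le_rfl⟩
  · have hANT : A ∈ NTset g := hv.mem_NTset
    have hcard : seen.card < (NTset g).card :=
      Finset.card_lt_card (Finset.ssubset_iff_of_subset hseen |>.mpr ⟨A, hANT, hA⟩)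
    have hht2 : 2 ≤ height (.node A cs) := by omega
    obtain ⟨s, hs, hhs⟩ := exists_height_child hht2
    match s, hhs, hs with
    | .leaf a, hhs, hs => rw [height] at hhs; omega
    | .node A' cs'', hhs, hs =>
    obtain ⟨cs₁, cs₂, rfl⟩ := List.append_of_mem hs
    have hvs : Valid g (.node A' cs'') := by
      cases hv with
      | node _ _ r hr hi ho h => exact h _ hs
    have hszs : size (.node A' cs'') < size (.node A (cs₁ ++ .node A' cs'' :: cs₂)) :=
      size_lt_of_mem hs
    have hctx0 : Ctx g A A' (cs₁.flatMap yield) (cs₂.flatMap yield) := ctx_child hv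
    have hyt := yield_node_middle A cs₁ cs₂ (.node A' cs'')
    have hrec := ih (size (.node A' cs'')) (by omega) A' cs'' (insert A seen) le_rfl hvs
      (Finset.insert_subset hANT hseen)
      (by rw [Finset.card_insert_of_notMem hA]; omega)
    rcases hrec with ⟨B, hB, x₁, z₁, cs₂', hv₂, hy₁, hctx₁, hsz₁⟩ | hfound
    · -- Hit from the child
      by_cases hBA : B = A
      · subst hBA
        refine Or.inr ⟨B, [], cs₁.flatMap yield ++ x₁, yield (.node B cs₂'),
          z₁ ++ cs₂.flatMap yield, [], ?_, Ctx.rfl B, hctx0.comp hctx₁, ?_, ?_⟩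
        · rw [hyt, hy₁]; simp [List.append_assoc]
        · have := hv₂.derives; rwa [sym] at this
        · by_cases hvz : (cs₁.flatMap yield ++ x₁) ++ (z₁ ++ cs₂.flatMap yield) = []
          · refine Or.inr ⟨cs₂', hv₂, ?_, by omega⟩
            simp only [List.append_eq_nil_iff] at hvz
            obtain ⟨⟨e1, e2⟩, e3, e4⟩ := hvz
            rw [hyt, hy₁, e1, e2, e3, e4]
            simp
          · exact Or.inl hvz
      · have hBseen : B ∈ seen := by
          rcases Finset.mem_insert.mp hB with h | h
          · exact absurd h hBA
          · exact h
        refine Or.inl ⟨B, hBseen, cs₁.flatMap yield ++ x₁, z₁ ++ cs₂.flatMap yield,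
          cs₂', hv₂, ?_, hctx0.comp hctx₁, by omega⟩
        rw [hyt, hy₁]; simp [List.append_assoc]
    · -- Found in the child
      obtain ⟨B, x, v, y, z, u, hy, hctxAB, hpump, hder, hor⟩ := hfound
      refine Or.inr ⟨B, cs₁.flatMap yield ++ x, v, y, z, u ++ cs₂.flatMap yield, ?_,
        hctx0.comp hctxAB, hpump, hder, ?_⟩
      · rw [hyt, hy]; simp [List.append_assoc]
      · rcases hor with h | ⟨cs', hv', hy', hsz'⟩
        · exact Or.inl h
        · refine Or.inr ⟨cs₁ ++ .node A' cs' :: cs₂, ?_, ?_, ?_⟩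
          · cases hv with
            | node _ _ r hr hi ho h =>
              refine Valid.node _ _ r hr hi ?_ ?_
              · rw [ho]; simp [sym]
              · intro t ht
                rcases List.mem_append.mp ht with h1 | h1
                · exact h _ (by simp [h1])
                · rcases List.mem_cons.mp h1 with h2 | h2
                  · exact h2 ▸ hv'
                  · exact h _ (by simp [h2])
          · rw [yield_node_middle, hy', hyt]
          · rw [size_node_middle, size_node_middle]; omega

end PTree
namespace PTree
variable {g : ContextFreeGrammar.{uT} T}

def PumpNE (g : ContextFreeGrammar.{uT} T) (A : g.NT) (w : List T) : Prop :=
  ∃ B x v y z u, w = x ++ v ++ y ++ z ++ u ∧ v ++ z ≠ [] ∧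
    Ctx g A B x u ∧ Ctx g B B v z ∧
    g.Derives [Symbol.nonterminal B] (y.map Symbol.terminal)

lemma extract (n : ℕ) : ∀ (A : g.NT) (cs : List (PTree T g.NT)),
    size (.node A cs) ≤ n → Valid g (.node A cs) →
    K g ^ (NTset g).card < (yield (.node A cs)).length →
    PumpNE g A (yield (.node A cs)) := by
  induction n using Nat.strong_induction_on with
  | _ n ih =>
  intro A cs hn hv hlen
  have hht : (NTset g).card < height (.node A cs) := by
    have h1 := hv.length_yield_le
    have h2 : K g ^ (NTset g).card < K g ^ height (.node A cs) := by omega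
    exact (Nat.pow_lt_pow_iff_right (by have := two_le_K g; omega)).mp h2
  have hd := descent (size (.node A cs)) A cs ∅ le_rfl hv (Finset.empty_subset _)
    (by simpa using hht)
  rcases hd with ⟨B, hB, _⟩ | hfound
  · simp at hB
  · obtain ⟨B, x, v, y, z, u, hy, hctxAB, hpump, hder, hor⟩ := hfound
    rcases hor with hne | ⟨cs', hv', hy', hsz'⟩
    · exact ⟨B, x, v, y, z, u, hy, hne, hctxAB, hpump, hder⟩
    · have := ih (size (.node A cs')) (by omega) A cs' le_rfl hv' (by rw [hy']; omega)
      rwa [hy'] at this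
end PTree

lemma flatten_replicate_comm {α : Type*} (l : List α) (i : ℕ) :
    l ++ (List.replicate i l).flatten = (List.replicate i l).flatten ++ l := by
  induction i with
  | zero => simp
  | succ i ih =>
    simp only [List.replicate_succ, List.flatten_cons]
    rw [ih, ← List.append_assoc, ih, List.append_assoc]

lemma join_replicate_succ {α : Type*} (l : List α) (i : ℕ) :
    (List.replicate (i + 1) l).flatten = (List.replicate i l).flatten ++ l := by
  rw [List.replicate_succ, List.flatten_cons, flatten_replicate_comm]

namespace PTree
variable {g : ContextFreeGrammar.{uT} T}

lemma pump_iter {B : g.NT} {v z : List T} (hp : Ctx g B B v z) (i : ℕ) :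
    g.Derives [Symbol.nonterminal B]
      (((List.replicate i v).flatten).map Symbol.terminal ++ [Symbol.nonterminal B] ++
        ((List.replicate i z).flatten).map Symbol.terminal) := by
  induction i with
  | zero => simpa using ContextFreeGrammar.Derives.refl [Symbol.nonterminal B]
  | succ i ihi =>
    refine ihi.trans ?_
    have := (hp.append_left ((List.replicate i v).flatten.map Symbol.terminal)).append_right
      ((List.replicate i z).flatten.map Symbol.terminal)
    rw [join_replicate_succ, join_replicate_succ]
    simpa [List.append_assoc, flatten_replicate_comm] using this

theorem cf_pumping {w : List T} (hw : w ∈ g.language)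
    (hlen : K g ^ (NTset g).card < w.length) :
    ∃ x v y z u : List T, w = x ++ v ++ y ++ z ++ u ∧ v ++ z ≠ [] ∧
      ∀ i : ℕ, x ++ (List.replicate i v).flatten ++ y ++ (List.replicate i z).flatten ++ u
        ∈ g.language := by
  obtain ⟨cs, hv, hy⟩ := exists_tree hw
  obtain ⟨B, x, v, y, z, u, hdec, hne, hctx, hpump, hder⟩ :=
    extract (size (.node g.initial cs)) g.initial cs le_rfl hv (by rw [hy]; exact hlen)
  rw [hy] at hdec
  refine ⟨x, v, y, z, u, hdec, hne, fun i => ?_⟩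
  rw [ContextFreeGrammar.mem_language_iff]
  have d1 : g.Derives [Symbol.nonterminal g.initial]
      (x.map Symbol.terminal ++ [Symbol.nonterminal B] ++ u.map Symbol.terminal) := hctx
  have d2 := ((pump_iter hpump i).append_left (x.map Symbol.terminal)).append_right
    (u.map Symbol.terminal)
  have d3 := ((hder.append_left
    (x.map Symbol.terminal ++ (List.replicate i v).flatten.map Symbol.terminal)).append_right
    ((List.replicate i z).flatten.map Symbol.terminal ++ u.map Symbol.terminal))
  have d2' : g.Derives
      (List.map Symbol.terminal x ++ [Symbol.nonterminal B] ++ List.map Symbol.terminal u)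
      (List.map Symbol.terminal x ++ List.map Symbol.terminal (List.replicate i v).flatten ++
        [Symbol.nonterminal B] ++
        (List.map Symbol.terminal (List.replicate i z).flatten ++ List.map Symbol.terminal u)) := by
    simpa [List.append_assoc] using d2
  have dfin := (d1.trans d2').trans d3
  simpa [List.append_assoc] using dfin
end PTree

lemma count_flatten_replicate {α : Type*} [BEq α] (a : α) (l : List α) (i : ℕ) :
    ((List.replicate i l).flatten).count a = i * l.count a := by
  induction i with
  | zero => simp
  | succ i ih =>
    rw [List.replicate_succ, List.flatten_cons, List.count_append, ih]
    ring

lemma cnt_total (l : List Alph) :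
    l.count Alph.u + l.count Alph.z + l.count Alph.h = l.length := by
  induction l with
  | nil => simp
  | cons a l ih => cases a <;> simp [List.count_cons] <;> omega

lemma counts_of_mem {w : List Alph} (hm : w ∈ Lcc') :
    w.count Alph.h = 1 ∧ 2 ^ w.count Alph.z ≤ w.count Alph.u + 1 := by
  obtain ⟨n, m, rfl, hle⟩ := hm
  have h2 : 1 ≤ 2 ^ m := Nat.one_le_two_pow
  constructor
  · simp [List.count_append, List.count_replicate]
  · have hu : (List.replicate n Alph.u ++ List.replicate m Alph.z ++ [Alph.h]).count Alph.u
        = n := by simp [List.count_append, List.count_replicate]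
    have hz : (List.replicate n Alph.u ++ List.replicate m Alph.z ++ [Alph.h]).count Alph.z
        = m := by simp [List.count_append, List.count_replicate]
    rw [hu, hz]
    omega

/-- L' = { u^n 0^m h : n ≥ 2^m − 1 } is not context-free. -/
theorem Lcc'_not_contextFree : ¬ Lcc'.IsContextFree := by
  rintro ⟨g, hg⟩
  set M := PTree.K g ^ (PTree.NTset g).card with hM
  set m := M with hm
  have h2m : 1 ≤ 2 ^ m := Nat.one_le_two_pow
  set N := 2 ^ m - 1 with hN
  set w : List Alph := List.replicate N Alph.u ++ List.replicate m Alph.z ++ [Alph.h] with hw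
  have hwmem : w ∈ Lcc' := ⟨N, m, rfl, le_rfl⟩
  have hwlen : M < w.length := by
    rw [hw]
    simp only [List.length_append, List.length_replicate, List.length_cons, List.length_nil]
    omega
  have hwlang : w ∈ g.language := by rw [hg]; exact hwmem
  obtain ⟨x, v, y, z, u, hdec, hne, hpump⟩ := PTree.cf_pumping hwlang hwlen
  -- letter counts of w
  have hcu : w.count Alph.u = N := by rw [hw]; simp [List.count_append, List.count_replicate]
  have hcz : w.count Alph.z = m := by rw [hw]; simp [List.count_append, List.count_replicate]
  have hch : w.count Alph.h = 1 := by rw [hw]; simp [List.count_append, List.count_replicate]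
  have hcount : ∀ c : Alph, w.count c =
      x.count c + v.count c + y.count c + z.count c + u.count c := by
    intro c; rw [hdec]; simp [List.count_append]; ring
  have hpcount : ∀ (i : ℕ) (c : Alph),
      (x ++ (List.replicate i v).flatten ++ y ++ (List.replicate i z).flatten ++ u).count c
      = x.count c + i * v.count c + y.count c + i * z.count c + u.count c := by
    intro i c; simp [List.count_append, count_flatten_replicate]; ring
  have hp0 := counts_of_mem (by rw [← hg]; exact hpump 0)
  have hp2 := counts_of_mem (by rw [← hg]; exact hpump 2)
  rw [hpcount 0 Alph.h, hpcount 0 Alph.z, hpcount 0 Alph.u] at hp0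
  rw [hpcount 2 Alph.h, hpcount 2 Alph.z, hpcount 2 Alph.u] at hp2
  -- the pumped part is nonempty
  have hlen1 : 1 ≤ (v ++ z).length := by
    rcases List.eq_nil_or_concat (v ++ z) with h | ⟨l, a, h⟩
    · exact absurd h hne
    · rw [h]; simp
  have htot := cnt_total (v ++ z)
  rw [List.count_append, List.count_append, List.count_append, List.length_append] at htot
  -- case analysis
  have hah : v.count Alph.h + z.count Alph.h = 0 := by
    have := hcount Alph.h
    omega
  by_cases haz : v.count Alph.z + z.count Alph.z = 0
  · -- only u's pumped; pumping down leaves too few u's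
    have hau : 1 ≤ v.count Alph.u + z.count Alph.u := by
      rw [List.length_append] at hlen1
      omega
    have hcu' := hcount Alph.u
    have hcz' := hcount Alph.z
    have hE : 2 ^ m ≤ 2 ^ (x.count Alph.z + 0 * v.count Alph.z + y.count Alph.z
        + 0 * z.count Alph.z + u.count Alph.z) := by
      apply Nat.pow_le_pow_right (by norm_num)
      omega
    omega
  · -- some z pumped; pumping up overshoots
    have haz1 : 1 ≤ v.count Alph.z + z.count Alph.z := by omega
    have hcu' := hcount Alph.u
    have hcz' := hcount Alph.z
    have hpow : 2 ^ (m + 1) ≤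
        2 ^ (x.count Alph.z + 2 * v.count Alph.z + y.count Alph.z + 2 * z.count Alph.z
          + u.count Alph.z) := by
      apply Nat.pow_le_pow_right (by norm_num)
      omega
    rw [Nat.pow_succ] at hpow
    omega
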